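/- Let g > 0, h_ℓ, h_r > 0, u_ℓ, u_r ∈ ℝ, and define the shallow water depth function φ(h) = f(h;h_ℓ) + f(h;h_r) + u_r − u_ℓ, where f(h;h₀) = 2*(sqrt(g*h) − sqrt(g*h₀)) if h ≤ h₀ and f(h;h₀) = (h − h₀)*sqrt((g/2)*(h + h₀)/(h*h₀)) if h > h₀. Then φ'(h) > 0 for all h > 0. -/

import Mathlib

noncomputable def swWave (g h₀ : ℝ) : ℝ → ℝ := fun h =>
  if h ≤ h₀ then 2 * (Real.sqrt (g * h) - Real.sqrt (g * h₀))
  else (h - h₀) * Real.sqrt ((g / 2) * (h + h₀) / (h * h₀))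

noncomputable def swDepthFun (g hl hr ul ur : ℝ) : ℝ → ℝ := fun h =>
  swWave g hl h + swWave g hr h + ur - ul

lemma left_hasDeriv (g h₀ : ℝ) (hg : 0 < g) (h : ℝ) (hh : 0 < h) :
    HasDerivAt (fun x => 2 * (Real.sqrt (g * x) - Real.sqrt (g * h₀)))
      (g / Real.sqrt (g * h)) h := by
  have h1 : HasDerivAt (fun x : ℝ => g * x) g h := by
    simpa using (hasDerivAt_id h).const_mul g
  have h2 := (Real.hasDerivAt_sqrt (show g * h ≠ 0 from ne_of_gt (mul_pos hg hh))).comp h h1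
  have h3 := (h2.sub_const (Real.sqrt (g * h₀))).const_mul 2
  have hs : 0 < Real.sqrt (g * h) := Real.sqrt_pos.2 (mul_pos hg hh)
  refine h3.congr_deriv ?_
  field_simp

lemma right_hasDeriv (g h₀ : ℝ) (hg : 0 < g) (hh₀ : 0 < h₀) (h : ℝ) (hh : 0 < h) :
    HasDerivAt (fun x => (x - h₀) * Real.sqrt ((g / 2) * (x + h₀) / (x * h₀)))
      (Real.sqrt ((g / 2) * (h + h₀) / (h * h₀)) +
        (h - h₀) * (-(g / 2) / h ^ 2 / (2 * Real.sqrt ((g / 2) * (h + h₀) / (h * h₀))))) h := by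
  have hn : HasDerivAt (fun x : ℝ => (g / 2) * (x + h₀)) (g / 2) h := by
    simpa using ((hasDerivAt_id h).add_const h₀).const_mul (g / 2)
  have hd : HasDerivAt (fun x : ℝ => x * h₀) h₀ h := by
    simpa using (hasDerivAt_id h).mul_const h₀
  have hA : HasDerivAt (fun x : ℝ => (g / 2) * (x + h₀) / (x * h₀)) (-(g / 2) / h ^ 2) h := by
    have := hn.div hd (by positivity)
    refine this.congr_deriv ?_
    field_simp
    ring
  have hApos : 0 < (g / 2) * (h + h₀) / (h * h₀) := by positivity
  have hsqrt := (Real.hasDerivAt_sqrt (ne_of_gt hApos)).comp h hA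
  have hmul := ((hasDerivAt_id h).sub_const h₀).mul hsqrt
  refine hmul.congr_deriv ?_
  simp only [Function.comp, id]
  ring

lemma right_deriv_pos (g h₀ h : ℝ) (hg : 0 < g) (hh₀ : 0 < h₀) (hle : h₀ ≤ h) :
    0 < Real.sqrt ((g / 2) * (h + h₀) / (h * h₀)) +
        (h - h₀) * (-(g / 2) / h ^ 2 / (2 * Real.sqrt ((g / 2) * (h + h₀) / (h * h₀)))) := by
  have hh : 0 < h := lt_of_lt_of_le hh₀ hle
  set s := Real.sqrt ((g / 2) * (h + h₀) / (h * h₀)) with hsdef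
  have hApos : 0 < (g / 2) * (h + h₀) / (h * h₀) := by positivity
  have hs0 : 0 < s := Real.sqrt_pos.2 hApos
  have hs2 : s ^ 2 = (g / 2) * (h + h₀) / (h * h₀) := Real.sq_sqrt hApos.le
  have h2s : 0 < 2 * s * h ^ 2 := by positivity
  have key : s + (h - h₀) * (-(g / 2) / h ^ 2 / (2 * s)) =
      (2 * s ^ 2 * h ^ 2 - (h - h₀) * (g / 2)) / (2 * s * h ^ 2) := by
    field_simp
    ring
  rw [key]
  apply div_pos _ h2s
  rw [hs2]
  have hrw : 2 * ((g / 2) * (h + h₀) / (h * h₀)) * h ^ 2 - (h - h₀) * (g / 2) =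
      g * (2 * h * (h + h₀) - h₀ * (h - h₀)) / (2 * h₀) := by
    field_simp
  rw [hrw]
  apply div_pos _ (by positivity)
  have : 0 < 2 * h * (h + h₀) - h₀ * (h - h₀) := by nlinarith [mul_pos hh hh₀, sq_nonneg h]
  positivity

lemma junct (g h₀ : ℝ) (hg : 0 < g) (hh₀ : 0 < h₀) :
    Real.sqrt ((g / 2) * (h₀ + h₀) / (h₀ * h₀)) +
      (h₀ - h₀) * (-(g / 2) / h₀ ^ 2 / (2 * Real.sqrt ((g / 2) * (h₀ + h₀) / (h₀ * h₀)))) =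
      g / Real.sqrt (g * h₀) := by
  rw [sub_self, zero_mul, add_zero]
  rw [show (g / 2) * (h₀ + h₀) / (h₀ * h₀) = g / h₀ by field_simp; ring]
  rw [eq_div_iff (Real.sqrt_pos.2 (mul_pos hg hh₀)).ne']
  rw [← Real.sqrt_mul (by positivity : (0:ℝ) ≤ g / h₀)]
  rw [show g / h₀ * (g * h₀) = g ^ 2 by field_simp]
  exact Real.sqrt_sq hg.le

lemma swWave_hasDeriv (g h₀ : ℝ) (hg : 0 < g) (hh₀ : 0 < h₀) (h : ℝ) (hh : 0 < h) :
    ∃ d, 0 < d ∧ HasDerivAt (swWave g h₀) d h := by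
  rcases lt_trichotomy h h₀ with hlt | heq | hgt
  · refine ⟨g / Real.sqrt (g * h), by positivity, ?_⟩
    apply (left_hasDeriv g h₀ hg h hh).congr_of_eventuallyEq
    filter_upwards [Iio_mem_nhds hlt] with x hx
    simp [swWave, (Set.mem_Iio.1 hx).le]
  · subst heq
    refine ⟨g / Real.sqrt (g * h), by positivity, ?_⟩
    have hL : HasDerivWithinAt (swWave g h) (g / Real.sqrt (g * h)) (Set.Iic h) h := by
      refine ((left_hasDeriv g h hg h hh).hasDerivWithinAt).congr ?_ ?_
      · intro x hx
        simp [swWave, Set.mem_Iic.1 hx]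
      · simp [swWave]
    have hR : HasDerivWithinAt (swWave g h) (g / Real.sqrt (g * h)) (Set.Ici h) h := by
      have hr := (right_hasDeriv g h hg hh h hh).hasDerivWithinAt (s := Set.Ici h)
      rw [junct g h hg hh] at hr
      refine hr.congr ?_ ?_
      · intro x hx
        rcases eq_or_lt_of_le (Set.mem_Ici.1 hx) with he | hl
        · rw [← he]; simp [swWave]
        · simp [swWave, not_le.2 hl]
      · simp [swWave]
    have := hL.union hR
    rw [Set.Iic_union_Ici] at this
    exact this.hasDerivAt (by simp)
  · refine ⟨_, right_deriv_pos g h₀ h hg hh₀ hgt.le, ?_⟩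
    apply (right_hasDeriv g h₀ hg hh₀ h hh).congr_of_eventuallyEq
    filter_upwards [Ioi_mem_nhds hgt] with x hx
    simp [swWave, not_le.2 (Set.mem_Ioi.1 hx)]

theorem stmt_10 (g hl hr ul ur : ℝ) (hg : 0 < g) (hhl : 0 < hl) (hhr : 0 < hr) :
    ∀ h : ℝ, 0 < h → 0 < deriv (swDepthFun g hl hr ul ur) h := by
  intro h hh
  obtain ⟨d1, hd1pos, hd1⟩ := swWave_hasDeriv g hl hg hhl h hh
  obtain ⟨d2, hd2pos, hd2⟩ := swWave_hasDeriv g hr hg hhr h hh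
  have hsum : HasDerivAt (swDepthFun g hl hr ul ur) (d1 + d2) h := by
    have := (((hd1.add hd2).add_const ur).sub_const ul)
    exact this
  rw [hsum.deriv]
  positivity
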